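/- Fix positive integer parameters n, m, k, c with 1 < k < n and 1 < c < m, a real n×m data matrix X, and a row-stochastic k×n matrix β; set Y = βX. Then there exist a row-stochastic n×k matrix α, a column-stochastic m×c matrix θ, and a column-stochastic c×m matrix γ that minimize RSS = ‖X − α(Yθ)γ‖² over all such triples (α, θ, γ), and such that every column of the biarchetype matrix Z = Yθ = βXθ, viewed as a point of ℝ^k, belongs to the frontier (topological boundary) of the convex hull of the set of columns of Y. -/

import Mathlib

open Matrix

/-- Row-stochastic: nonnegative entries, each row sums to 1. -/
def RowStoch {n k : ℕ} (A : Matrix (Fin n) (Fin k) ℝ) : Prop :=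
  (∀ i j, 0 ≤ A i j) ∧ ∀ i, ∑ j, A i j = 1

/-- Column-stochastic: nonnegative entries, each column sums to 1. -/
def ColStoch {m c : ℕ} (A : Matrix (Fin m) (Fin c) ℝ) : Prop :=
  (∀ i j, 0 ≤ A i j) ∧ ∀ j, ∑ i, A i j = 1

/-- Squared Frobenius norm. -/
def frob2 {n m : ℕ} (M : Matrix (Fin n) (Fin m) ℝ) : ℝ :=
  ∑ i, ∑ j, (M i j) ^ 2

section Aux

attribute [local instance] Classical.propDecidable

variable {E : Type*} [NormedAddCommGroup E] [NormedSpace ℝ E]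

/-- Membership in convex hull of a finite range gives stochastic weights. -/
lemma hull_mem_weights {ι : Type*} [Fintype ι] {f : ι → E} {x : E}
    (hx : x ∈ convexHull ℝ (Set.range f)) :
    ∃ w : ι → ℝ, (∀ i, 0 ≤ w i) ∧ ∑ i, w i = 1 ∧ ∑ i, w i • f i = x := by
  rw [convexHull_range_eq_exists_affineCombination] at hx
  obtain ⟨s, w, hw0, hw1, hx⟩ := hx
  refine ⟨fun i => if i ∈ s then w i else 0, fun i => ?_, ?_, ?_⟩
  · dsimp only; split
    · exact hw0 _ ‹_›
    · exact le_refl 0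
  · rw [Finset.sum_ite_mem, Finset.univ_inter, hw1]
  · rw [← hx, s.affineCombination_eq_linear_combination f w hw1]
    rw [show (∑ i, (if i ∈ s then w i else 0) • f i) = ∑ i, if i ∈ s then w i • f i else 0 from
      Finset.sum_congr rfl fun i _ => by split <;> simp]
    rw [Finset.sum_ite_mem, Finset.univ_inter]

/-- Stochastic combinations lie in the convex hull of the range. -/
lemma weights_mem_hull {ι : Type*} [Fintype ι] (f : ι → E) {w : ι → ℝ}
    (hw0 : ∀ i, 0 ≤ w i) (hw1 : ∑ i, w i = 1) :
    ∑ i, w i • f i ∈ convexHull ℝ (Set.range f) := by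
  have := Finset.centerMass_mem_convexHull (Finset.univ : Finset ι)
    (fun i _ => hw0 i) (by rw [hw1]; norm_num) (fun i _ => Set.mem_range_self (f := f) i)
  rwa [Finset.centerMass_eq_of_sum_1 _ _ hw1] at this

/-- Exit lemma: from an interior point of a compact set, a ray hits the frontier. -/
lemma exitPos {C : Set E} (hcomp : IsCompact C) {x v : E}
    (hx : x ∈ interior C) (hv : v ≠ 0) :
    ∃ t : ℝ, 0 < t ∧ x + t • v ∈ frontier C ∧
      ∀ s : ℝ, 0 ≤ s → x + s • v ∈ C → s ≤ t := by
  have hCclosed : IsClosed C := hcomp.isClosed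
  set T : Set ℝ := {s : ℝ | 0 ≤ s ∧ x + s • v ∈ C} with hT
  have hvpos : (0:ℝ) < ‖v‖ := norm_pos_iff.mpr hv
  obtain ⟨r, hr⟩ := hcomp.isBounded.subset_ball (0 : E)
  have hTsub : T ⊆ Set.Icc 0 ((r + ‖x‖) / ‖v‖) := by
    rintro s ⟨hs0, hsC⟩
    refine ⟨hs0, ?_⟩
    have h1 : ‖x + s • v‖ < r := by simpa using hr hsC
    have h2 : s * ‖v‖ = ‖s • v‖ := by
      rw [norm_smul, Real.norm_eq_abs, abs_of_nonneg hs0]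
    have h3 : ‖s • v‖ ≤ ‖x + s • v‖ + ‖x‖ := by
      have := norm_add_le (x + s • v) (-x); simpa using this
    rw [le_div_iff₀ hvpos]
    nlinarith
  have hTclosed : IsClosed T := by
    have : T = Set.Ici 0 ∩ (fun s : ℝ => x + s • v) ⁻¹' C := by
      ext s; simp [hT, Set.mem_Ici]
    rw [this]
    exact isClosed_Ici.inter (hCclosed.preimage (by fun_prop))
  have hTne : T.Nonempty := ⟨0, le_refl 0, by simpa using interior_subset hx⟩
  have hTcomp : IsCompact T := (isCompact_Icc).of_isClosed_subset hTclosed hTsub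
  set t := sSup T with htdef
  have htT : t ∈ T := hTcomp.sSup_mem hTne
  have hbdd : BddAbove T := hTcomp.isBounded.bddAbove
  obtain ⟨ε, hε, hball⟩ := Metric.isOpen_iff.mp isOpen_interior x hx
  have htpos : 0 < t := by
    have hmem : (ε / (2 * ‖v‖)) ∈ T := by
      refine ⟨by positivity, ?_⟩
      have : x + (ε / (2 * ‖v‖)) • v ∈ Metric.ball x ε := by
        rw [Metric.mem_ball, dist_eq_norm]
        have : ‖(ε / (2 * ‖v‖)) • v‖ = ε / 2 := by
          rw [norm_smul, Real.norm_eq_abs, abs_of_pos (by positivity)]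
          field_simp
        simpa [this] using by linarith
      exact interior_subset (hball this)
    have := le_csSup hbdd hmem
    have : (0:ℝ) < ε / (2 * ‖v‖) := by positivity
    linarith [le_csSup hbdd hmem]
  refine ⟨t, htpos, ?_, fun s hs0 hsC => le_csSup hbdd ⟨hs0, hsC⟩⟩
  rw [hCclosed.frontier_eq]
  refine ⟨htT.2, fun hint => ?_⟩
  obtain ⟨ε', hε', hball'⟩ := Metric.isOpen_iff.mp isOpen_interior _ hint
  have hmem : t + ε' / (2 * ‖v‖) ∈ T := by
    refine ⟨by positivity, ?_⟩
    have hpt : x + (t + ε' / (2 * ‖v‖)) • v ∈ Metric.ball (x + t • v) ε' := by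
      rw [Metric.mem_ball, dist_eq_norm]
      have heq : x + (t + ε' / (2 * ‖v‖)) • v - (x + t • v) = (ε' / (2 * ‖v‖)) • v := by
        module
      rw [heq, norm_smul, Real.norm_eq_abs, abs_of_pos (by positivity)]
      rw [div_mul_eq_mul_div, div_lt_iff₀ (by positivity)]
      nlinarith
    exact interior_subset (hball' hpt)
  have := le_csSup hbdd hmem
  have : (0:ℝ) < ε' / (2 * ‖v‖) := by positivity
  linarith [le_csSup hbdd hmem]

/-- Ray from a point of C through an interior point extends to a frontier point. -/
lemma ray_frontier {C : Set E} (hcomp : IsCompact C) {x y : E}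
    (hx : x ∈ C) (hy : y ∈ interior C) (hxy : x ≠ y) :
    ∃ b ∈ frontier C, y ∈ segment ℝ x b := by
  have hv : y - x ≠ 0 := sub_ne_zero.mpr (Ne.symm hxy)
  obtain ⟨t, ht, hbf, -⟩ := exitPos hcomp hy hv
  have h1t : (0:ℝ) < 1 + t := by linarith
  have ha0 : (0:ℝ) ≤ 1/(1+t) := by positivity
  have ha1 : 1/(1+t) ≤ 1 := by rw [div_le_one h1t]; linarith
  refine ⟨y + t • (y - x), hbf, 1 - 1/(1+t), 1/(1+t), by linarith, ha0, by ring, ?_⟩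
  · have h1t : (1:ℝ) + t ≠ 0 := by positivity
    match_scalars <;> field_simp <;> ring

/-- A point of a compact set on a line through an interior point lies on a chord
between two frontier points. -/
lemma chord_frontier {C : Set E} (hcomp : IsCompact C) {x v : E}
    (hx : x ∈ interior C) (hv : v ≠ 0) :
    ∃ bm bp : E, bm ∈ frontier C ∧ bp ∈ frontier C ∧
      ∀ s : ℝ, x + s • v ∈ C → x + s • v ∈ segment ℝ bm bp := by
  obtain ⟨tp, htp, hbp, hboundp⟩ := exitPos hcomp hx hv
  obtain ⟨tm, htm, hbm, hboundm⟩ := exitPos hcomp hx (neg_ne_zero.mpr hv)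
  refine ⟨x + tm • (-v), x + tp • v, hbm, hbp, fun s hs => ?_⟩
  have hd : (0:ℝ) < tm + tp := by linarith
  have hsle : s ≤ tp := by
    rcases le_or_gt 0 s with h0 | h0
    · exact hboundp s h0 hs
    · linarith
  have hsge : -tm ≤ s := by
    rcases le_or_gt 0 s with h0 | h0
    · linarith
    · have : -s ≤ tm := hboundm (-s) (by linarith) (by
        have : x + s • v = x + (-s) • (-v) := by module
        rwa [this] at hs)
      linarith
  have hl0 : (0:ℝ) ≤ (s + tm)/(tm + tp) := div_nonneg (by linarith) hd.le
  have hl1 : (s + tm)/(tm + tp) ≤ 1 := by rw [div_le_one hd]; linarith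
  refine ⟨1 - (s + tm)/(tm + tp), (s + tm)/(tm + tp), by linarith, hl0, by ring, ?_⟩
  · have hd' : tm + tp ≠ 0 := ne_of_gt hd
    match_scalars <;> field_simp <;> ring

lemma frontier_cover {C : Set E} (hcomp : IsCompact C) {c : ℕ} (hc : 2 ≤ c)
    (z : Fin c → E) (hz : ∀ h, z h ∈ C) (v0 : E) (hv0 : v0 ≠ 0) :
    ∃ b : Fin c → E, (∀ h, b h ∈ frontier C) ∧ ∀ h, z h ∈ convexHull ℝ (Set.range b) := by
  have hfr : frontier C = C \ interior C := hcomp.isClosed.frontier_eq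
  have hfrC : frontier C ⊆ C := by rw [hfr]; exact Set.diff_subset
  by_cases hint : (interior C).Nonempty
  · by_cases hall : ∀ h, z h ∈ interior C
    · -- all points interior
      set i0 : Fin c := ⟨0, by omega⟩ with hi0
      set i1 : Fin c := ⟨1, by omega⟩ with hi1
      have hne : i1 ≠ i0 := by simp [hi0, hi1, Fin.ext_iff]
      set v : E := if z i1 = z i0 then v0 else z i1 - z i0 with hvdef
      have hv : v ≠ 0 := by
        rw [hvdef]; split
        · exact hv0
        · exact sub_ne_zero.mpr ‹¬ z i1 = z i0›
      obtain ⟨bm, bp, hbm, hbp, hseg⟩ := chord_frontier hcomp (hall i0) hv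
      have hz0seg : z i0 ∈ segment ℝ bm bp := by
        have := hseg 0 (by simpa using hz i0)
        simpa using this
      have hz1seg : z i1 ∈ segment ℝ bm bp := by
        by_cases h10 : z i1 = z i0
        · rw [h10]; exact hz0seg
        · have hv1 : z i0 + (1:ℝ) • v = z i1 := by
            rw [hvdef, if_neg h10]; module
          have := hseg 1 (by rw [hv1]; exact hz i1)
          rwa [hv1] at this
      have hray : ∀ h : Fin c, h ≠ i0 → h ≠ i1 →
          ∃ b ∈ frontier C, z h ∈ segment ℝ bp b := fun h _ _ =>
        ray_frontier hcomp (hfrC hbp) (hall h)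
          (fun he => (hfr ▸ hbp).2 (he ▸ hall h))
      set b : Fin c → E := fun h =>
        if h0 : h = i0 then bp else if h1 : h = i1 then bm
        else (hray h h0 h1).choose with hbdef
      have hb0 : b i0 = bp := by simp [hbdef]
      have hb1 : b i1 = bm := by simp [hbdef, hne]
      have hmembp : bp ∈ convexHull ℝ (Set.range b) :=
        subset_convexHull ℝ _ ⟨i0, hb0⟩
      have hmembm : bm ∈ convexHull ℝ (Set.range b) :=
        subset_convexHull ℝ _ ⟨i1, hb1⟩
      refine ⟨b, fun h => ?_, fun h => ?_⟩
      · rw [hbdef]; dsimp only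
        split
        · exact hbp
        · split
          · exact hbm
          · exact (hray h ‹_› ‹_›).choose_spec.1
      · by_cases h0 : h = i0
        · subst h0
          exact (convex_convexHull ℝ _).segment_subset hmembm hmembp hz0seg
        by_cases h1 : h = i1
        · subst h1
          exact (convex_convexHull ℝ _).segment_subset hmembm hmembp hz1seg
        · have hspec := (hray h h0 h1).choose_spec
          have hmemb : (hray h h0 h1).choose ∈ convexHull ℝ (Set.range b) := by
            refine subset_convexHull ℝ _ ⟨h, ?_⟩
            simp [hbdef, h0, h1]
          exact (convex_convexHull ℝ _).segment_subset hmembp hmemb hspec.2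
    · -- some point is on the frontier
      push_neg at hall
      obtain ⟨h0, hh0⟩ := hall
      have hray : ∀ h : Fin c, z h ∈ interior C →
          ∃ b ∈ frontier C, z h ∈ segment ℝ (z h0) b := fun h hh =>
        ray_frontier hcomp (hz h0) hh (fun he => hh0 (he ▸ hh))
      set b : Fin c → E := fun h =>
        if hh : z h ∈ interior C then (hray h hh).choose else z h with hbdef
      have hb0 : b h0 = z h0 := by simp [hbdef, hh0]
      have hmemp : z h0 ∈ convexHull ℝ (Set.range b) :=
        subset_convexHull ℝ _ ⟨h0, hb0⟩
      refine ⟨b, fun h => ?_, fun h => ?_⟩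
      · rw [hbdef]; dsimp only
        split
        · exact (hray h ‹_›).choose_spec.1
        · rw [hfr]; exact ⟨hz h, ‹_›⟩
      · by_cases hh : z h ∈ interior C
        · have hmemb : (hray h hh).choose ∈ convexHull ℝ (Set.range b) := by
            refine subset_convexHull ℝ _ ⟨h, ?_⟩
            simp [hbdef, hh]
          exact (convex_convexHull ℝ _).segment_subset hmemp hmemb
            ((hray h hh).choose_spec.2)
        · have : b h = z h := by simp [hbdef, hh]
          exact subset_convexHull ℝ _ ⟨h, this⟩
  · -- empty interior: frontier C = C
    rw [Set.not_nonempty_iff_eq_empty] at hint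
    refine ⟨z, fun h => ?_, fun h => subset_convexHull ℝ _ ⟨h, rfl⟩⟩
    rw [hfr, hint]
    simpa using hz h

/-- Columns of a matrix product as convex-type combinations of columns. -/
lemma col_formula {k m c : ℕ} (A : Matrix (Fin k) (Fin m) ℝ)
    (θ : Matrix (Fin m) (Fin c) ℝ) (h : Fin c) :
    (A * θ)ᵀ h = ∑ j, θ j h • Aᵀ j := by
  funext i
  rw [Finset.sum_apply]
  simp [Matrix.mul_apply, Matrix.transpose_apply, mul_comm]

/-- Reflection: any pair (θ, γ) can be replaced by one with the same product A θ γ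
and all columns of A θ'' on the frontier of the convex hull of the columns of A. -/
lemma reflect {k m c : ℕ} (hk : 1 ≤ k) (hc : 2 ≤ c) (A : Matrix (Fin k) (Fin m) ℝ)
    (θ : Matrix (Fin m) (Fin c) ℝ) (γ : Matrix (Fin c) (Fin m) ℝ)
    (hθ : ColStoch θ) (hγ : ColStoch γ) :
    ∃ (θ'' : Matrix (Fin m) (Fin c) ℝ) (γ'' : Matrix (Fin c) (Fin m) ℝ),
      ColStoch θ'' ∧ ColStoch γ'' ∧
      (∀ h, (A * θ'')ᵀ h ∈ frontier (convexHull ℝ (Set.range fun j => Aᵀ j))) ∧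
      A * θ'' * γ'' = A * θ * γ := by
  set Ycol : Fin m → (Fin k → ℝ) := fun j => Aᵀ j with hYcol
  set C : Set (Fin k → ℝ) := convexHull ℝ (Set.range Ycol) with hC
  have hCcomp : IsCompact C := (Set.finite_range Ycol).isCompact_convexHull ℝ
  have hfrC : frontier C ⊆ C := by
    rw [hCcomp.isClosed.frontier_eq]; exact Set.diff_subset
  have hv0 : (fun _ : Fin k => (1:ℝ)) ≠ 0 := by
    intro hcon
    have := congrFun hcon ⟨0, hk⟩
    norm_num at this
  set z : Fin c → (Fin k → ℝ) := fun h => (A * θ)ᵀ h with hz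
  have hzC : ∀ h, z h ∈ C := by
    intro h
    rw [hz]; dsimp only
    rw [col_formula]
    exact weights_mem_hull Ycol (fun j => hθ.1 j h) (hθ.2 h)
  obtain ⟨b, hbf, hbh⟩ := frontier_cover hCcomp hc z hzC _ hv0
  have hbC : ∀ h, b h ∈ C := fun h => hfrC (hbf h)
  -- weights for the frontier points
  have hW := fun h => hull_mem_weights (hbC h)
  set W : Fin c → Fin m → ℝ := fun h => (hW h).choose with hWdef
  have hWspec : ∀ h, (∀ j, 0 ≤ W h j) ∧ ∑ j, W h j = 1 ∧ ∑ j, W h j • Ycol j = b h :=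
    fun h => (hW h).choose_spec
  set θ'' : Matrix (Fin m) (Fin c) ℝ := fun j h => W h j with hθ''def
  have hθ''stoch : ColStoch θ'' := ⟨fun j h => (hWspec h).1 j, fun h => (hWspec h).2.1⟩
  have hcols : ∀ h, (A * θ'')ᵀ h = b h := by
    intro h
    rw [col_formula]
    exact (hWspec h).2.2
  -- weights for the data columns
  have hq : ∀ j, (A * θ * γ)ᵀ j ∈ convexHull ℝ (Set.range b) := by
    intro j
    rw [col_formula (A * θ) γ j]
    exact (convex_convexHull ℝ _).sum_mem (fun h _ => hγ.1 h j)
      (hγ.2 j) (fun h _ => hbh h)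
  have hV := fun j => hull_mem_weights (hq j)
  set V : Fin m → Fin c → ℝ := fun j => (hV j).choose with hVdef
  have hVspec : ∀ j, (∀ h, 0 ≤ V j h) ∧ ∑ h, V j h = 1 ∧
      ∑ h, V j h • b h = (A * θ * γ)ᵀ j := fun j => (hV j).choose_spec
  set γ'' : Matrix (Fin c) (Fin m) ℝ := fun h j => V j h with hγ''def
  have hγ''stoch : ColStoch γ'' := ⟨fun h j => (hVspec j).1 h, fun j => (hVspec j).2.1⟩
  refine ⟨θ'', γ'', hθ''stoch, hγ''stoch, fun h => by rw [hcols h]; exact hbf h, ?_⟩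
  have hT : (A * θ'' * γ'')ᵀ = (A * θ * γ)ᵀ := by
    funext j
    rw [col_formula (A * θ'') γ'' j]
    have : ∀ h, γ'' h j • (A * θ'')ᵀ h = V j h • b h := by
      intro h; rw [hcols h]
    rw [Finset.sum_congr rfl fun h _ => this h]
    exact (hVspec j).2.2
  have := congrArg Matrix.transpose hT
  rwa [Matrix.transpose_transpose, Matrix.transpose_transpose] at this

lemma isCompact_rowStoch {n k : ℕ} :
    IsCompact {A : Matrix (Fin n) (Fin k) ℝ | RowStoch A} := by
  have hbig : IsCompact (Set.univ.pi fun _ : Fin n =>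
      (Set.univ.pi fun _ : Fin k => Set.Icc (0:ℝ) 1 : Set (Fin k → ℝ))) :=
    isCompact_univ_pi fun _ => isCompact_univ_pi fun _ => isCompact_Icc
  refine hbig.of_isClosed_subset ?_ ?_
  · have h1 : IsClosed {A : Matrix (Fin n) (Fin k) ℝ | ∀ i j, 0 ≤ A i j} := by
      have : {A : Matrix (Fin n) (Fin k) ℝ | ∀ i j, 0 ≤ A i j} =
          ⋂ i, ⋂ j, {A : Matrix (Fin n) (Fin k) ℝ | 0 ≤ A i j} := by
        ext A; simp [Set.mem_iInter]
      rw [this]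
      exact isClosed_iInter fun i => isClosed_iInter fun j =>
        isClosed_le continuous_const ((continuous_apply j).comp (continuous_apply i))
    have h2 : IsClosed {A : Matrix (Fin n) (Fin k) ℝ | ∀ i, ∑ j, A i j = 1} := by
      have : {A : Matrix (Fin n) (Fin k) ℝ | ∀ i, ∑ j, A i j = 1} =
          ⋂ i, {A : Matrix (Fin n) (Fin k) ℝ | ∑ j, A i j = 1} := by
        ext A; simp [Set.mem_iInter]
      rw [this]
      refine isClosed_iInter fun i => isClosed_eq ?_ continuous_const
      exact continuous_finset_sum _ fun j _ => (continuous_apply j).comp (continuous_apply i)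
    have : {A : Matrix (Fin n) (Fin k) ℝ | RowStoch A} =
        {A | ∀ i j, 0 ≤ A i j} ∩ {A | ∀ i, ∑ j, A i j = 1} := by
      ext A; exact Iff.rfl
    rw [this]
    exact h1.inter h2
  · intro A hA
    rw [Set.mem_univ_pi]
    intro i
    rw [Set.mem_univ_pi]
    intro j
    refine ⟨hA.1 i j, ?_⟩
    rw [← hA.2 i]
    exact Finset.single_le_sum (fun j' _ => hA.1 i j') (Finset.mem_univ j)

lemma isCompact_colStoch {m c : ℕ} :
    IsCompact {A : Matrix (Fin m) (Fin c) ℝ | ColStoch A} := by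
  have hbig : IsCompact (Set.univ.pi fun _ : Fin m =>
      (Set.univ.pi fun _ : Fin c => Set.Icc (0:ℝ) 1 : Set (Fin c → ℝ))) :=
    isCompact_univ_pi fun _ => isCompact_univ_pi fun _ => isCompact_Icc
  refine hbig.of_isClosed_subset ?_ ?_
  · have h1 : IsClosed {A : Matrix (Fin m) (Fin c) ℝ | ∀ i j, 0 ≤ A i j} := by
      have : {A : Matrix (Fin m) (Fin c) ℝ | ∀ i j, 0 ≤ A i j} =
          ⋂ i, ⋂ j, {A : Matrix (Fin m) (Fin c) ℝ | 0 ≤ A i j} := by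
        ext A; simp [Set.mem_iInter]
      rw [this]
      exact isClosed_iInter fun i => isClosed_iInter fun j =>
        isClosed_le continuous_const ((continuous_apply j).comp (continuous_apply i))
    have h2 : IsClosed {A : Matrix (Fin m) (Fin c) ℝ | ∀ j, ∑ i, A i j = 1} := by
      have : {A : Matrix (Fin m) (Fin c) ℝ | ∀ j, ∑ i, A i j = 1} =
          ⋂ j, {A : Matrix (Fin m) (Fin c) ℝ | ∑ i, A i j = 1} := by
        ext A; simp [Set.mem_iInter]
      rw [this]
      refine isClosed_iInter fun j => isClosed_eq ?_ continuous_const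
      exact continuous_finset_sum _ fun i _ => (continuous_apply j).comp (continuous_apply i)
    have : {A : Matrix (Fin m) (Fin c) ℝ | ColStoch A} =
        {A | ∀ i j, 0 ≤ A i j} ∩ {A | ∀ j, ∑ i, A i j = 1} := by
      ext A; exact Iff.rfl
    rw [this]
    exact h1.inter h2
  · intro A hA
    rw [Set.mem_univ_pi]
    intro i
    rw [Set.mem_univ_pi]
    intro j
    refine ⟨hA.1 i j, ?_⟩
    rw [← hA.2 j]
    exact Finset.single_le_sum (fun i' _ => hA.1 i' j) (Finset.mem_univ i)

end Aux

/-- Proposition 2: with β fixed row-stochastic and Y = βX, there exist optimal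
row-stochastic α and column-stochastic θ, γ minimizing ‖X − α(Yθ)γ‖² such that every
column of the biarchetype matrix Z = βXθ lies on the frontier of the convex hull of
the columns of Y. -/
theorem stmt_1 (n m k c : ℕ) (hk1 : 1 < k) (hkn : k < n) (hc1 : 1 < c) (hcm : c < m)
    (X : Matrix (Fin n) (Fin m) ℝ) (β : Matrix (Fin k) (Fin n) ℝ) (hβ : RowStoch β) :
    ∃ (α : Matrix (Fin n) (Fin k) ℝ) (θ : Matrix (Fin m) (Fin c) ℝ)
      (γ : Matrix (Fin c) (Fin m) ℝ),
      RowStoch α ∧ ColStoch θ ∧ ColStoch γ ∧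
      (∀ (α' : Matrix (Fin n) (Fin k) ℝ) (θ' : Matrix (Fin m) (Fin c) ℝ)
         (γ' : Matrix (Fin c) (Fin m) ℝ),
        RowStoch α' → ColStoch θ' → ColStoch γ' →
        frob2 (X - α * (β * X * θ) * γ) ≤ frob2 (X - α' * (β * X * θ') * γ')) ∧
      (∀ h : Fin c,
        (β * X * θ)ᵀ h ∈
          frontier (convexHull ℝ (Set.range fun j : Fin m => (β * X)ᵀ j))) := by
  have hk : 1 ≤ k := by omega
  have hc : 2 ≤ c := by omega
  set A : Matrix (Fin k) (Fin m) ℝ := β * X with hAdef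
  set Chull : Set (Fin k → ℝ) := convexHull ℝ (Set.range fun j : Fin m => Aᵀ j) with hChull
  have hCcomp : IsCompact Chull := (Set.finite_range _).isCompact_convexHull ℝ
  have hfrC : frontier Chull ⊆ Chull := by
    rw [hCcomp.isClosed.frontier_eq]; exact Set.diff_subset
  have hv0 : (fun _ : Fin k => (1:ℝ)) ≠ 0 := by
    intro hcon
    have := congrFun hcon ⟨0, hk⟩
    norm_num at this
  -- a frontier point exists
  obtain ⟨p, hp⟩ : (frontier Chull).Nonempty := by
    by_cases hint : (interior Chull).Nonempty
    · obtain ⟨x0, hx0⟩ := hint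
      obtain ⟨t, -, hmem, -⟩ := exitPos hCcomp hx0 hv0
      exact ⟨_, hmem⟩
    · rw [Set.not_nonempty_iff_eq_empty] at hint
      have : frontier Chull = Chull := by
        rw [hCcomp.isClosed.frontier_eq, hint, Set.diff_empty]
      rw [this]
      exact ⟨Aᵀ ⟨0, by omega⟩, subset_convexHull ℝ _ ⟨⟨0, by omega⟩, rfl⟩⟩
  obtain ⟨w, hw0, hw1, hwp⟩ := hull_mem_weights (hfrC hp)
  -- the feasible set
  set Sθ : Set (Matrix (Fin m) (Fin c) ℝ) :=
    {θ | ColStoch θ ∧ ∀ h : Fin c, (A * θ)ᵀ h ∈ frontier Chull} with hSθ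
  have hSθcomp : IsCompact Sθ := by
    have hSθeq : Sθ = {θ : Matrix (Fin m) (Fin c) ℝ | ColStoch θ} ∩
        ⋂ h : Fin c, (fun θ : Matrix (Fin m) (Fin c) ℝ => (A * θ)ᵀ h) ⁻¹' frontier Chull := by
      ext θ
      simp only [hSθ, Set.mem_setOf_eq, Set.mem_inter_iff, Set.mem_iInter, Set.mem_preimage]
    rw [hSθeq]
    refine isCompact_colStoch.inter_right ?_
    refine isClosed_iInter fun h => IsClosed.preimage ?_ isClosed_frontier
    refine continuous_pi fun i => ?_
    have : (fun θ : Matrix (Fin m) (Fin c) ℝ => (A * θ)ᵀ h i) =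
        fun θ => ∑ j, A i j * θ j h := by
      funext θ; simp [Matrix.mul_apply, Matrix.transpose_apply]
    rw [this]
    exact continuous_finset_sum _ fun j _ =>
      continuous_const.mul ((continuous_apply h).comp (continuous_apply j))
  have hSθne : Sθ.Nonempty := by
    set θp : Matrix (Fin m) (Fin c) ℝ := fun j _ => w j with hθp
    refine ⟨θp, ⟨fun j h' => hw0 j, fun h' => hw1⟩, fun h' => ?_⟩
    have : (A * θp)ᵀ h' = p := by
      rw [col_formula]
      exact hwp
    rw [this]
    exact hp
  set K : Set ((Matrix (Fin n) (Fin k) ℝ) ×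
      (Matrix (Fin m) (Fin c) ℝ) × (Matrix (Fin c) (Fin m) ℝ)) :=
    {q | RowStoch q} ×ˢ (Sθ ×ˢ {q | ColStoch q}) with hK
  have hKcomp : IsCompact K := by
    refine IsCompact.prod ?_ (hSθcomp.prod ?_)
    · exact isCompact_rowStoch
    · exact isCompact_colStoch
  have hKne : K.Nonempty := by
    obtain ⟨θ0, hθ0⟩ := hSθne
    classical
    refine ⟨⟨fun _ l => if l = ⟨0, by omega⟩ then 1 else 0, θ0,
      fun h _ => if h = ⟨0, by omega⟩ then 1 else 0⟩, ⟨?_, ?_⟩, hθ0, ⟨?_, ?_⟩⟩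
    · intro i j; dsimp only; split <;> norm_num
    · intro i; simp
    · intro i j; dsimp only; split <;> norm_num
    · intro j; simp
  -- the objective is continuous
  set f : ((Matrix (Fin n) (Fin k) ℝ) ×
      (Matrix (Fin m) (Fin c) ℝ) × (Matrix (Fin c) (Fin m) ℝ)) → ℝ :=
    fun q => frob2 (X - q.1 * (A * q.2.1) * q.2.2) with hf
  have hfcont : Continuous f := by
    have hmul : Continuous fun q : ((Matrix (Fin n) (Fin k) ℝ) ×
        (Matrix (Fin m) (Fin c) ℝ) × (Matrix (Fin c) (Fin m) ℝ)) =>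
        q.1 * (A * q.2.1) * q.2.2 :=
      (continuous_fst.matrix_mul
        (continuous_const.matrix_mul (continuous_fst.comp continuous_snd))).matrix_mul
        (continuous_snd.comp continuous_snd)
    have hsub : Continuous fun q : ((Matrix (Fin n) (Fin k) ℝ) ×
        (Matrix (Fin m) (Fin c) ℝ) × (Matrix (Fin c) (Fin m) ℝ)) =>
        X - q.1 * (A * q.2.1) * q.2.2 := continuous_const.sub hmul
    have hfrob : Continuous fun M : Matrix (Fin n) (Fin m) ℝ => frob2 M := by
      unfold frob2
      exact continuous_finset_sum _ fun i _ => continuous_finset_sum _ fun j _ =>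
        ((continuous_apply j).comp (continuous_apply i)).pow 2
    exact hfrob.comp hsub
  obtain ⟨q, hqK, hqmin⟩ := hKcomp.exists_isMinOn hKne hfcont.continuousOn
  rw [isMinOn_iff] at hqmin
  obtain ⟨hα, ⟨hθs, hθf⟩, hγ⟩ := hqK
  refine ⟨q.1, q.2.1, q.2.2, hα, hθs, hγ, ?_, ?_⟩
  · intro α' θ' γ' hα' hθ' hγ'
    obtain ⟨θ'', γ'', hθ''s, hγ''s, hfront'', heq⟩ := reflect hk hc A θ' γ' hθ' hγ'
    have hmem : (α', θ'', γ'') ∈ K := ⟨hα', ⟨hθ''s, fun h => hfront'' h⟩, hγ''s⟩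
    have hle := hqmin _ hmem
    have hprod : α' * (A * θ'') * γ'' = α' * (A * θ') * γ' := by
      rw [Matrix.mul_assoc α', Matrix.mul_assoc α', heq]
    calc frob2 (X - q.1 * (A * q.2.1) * q.2.2) ≤
        frob2 (X - α' * (A * θ'') * γ'') := hle
      _ = frob2 (X - α' * (A * θ') * γ') := by rw [hprod]
  · intro h
    exact hθf h
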